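/- Let (V,d,μ) be a probability metric space. For every x ∈ ℝ, sup over all integrable 1-Lipschitz f : V → ℝ of μ{u : f(u) - E_μ f ≥ x} equals sup over all nonempty measurable A ⊆ V of μ{u : g_A(u) - E_μ g_A ≥ x}, where g_A(u) = -d(A,u), provided g_A is integrable for each such A. -/

import Mathlib

open MeasureTheory

theorem stmt_3 {V : Type*} [MetricSpace V] [MeasurableSpace V] [BorelSpace V]
    (μ : Measure V) [IsProbabilityMeasure μ]
    (hintA : ∀ A : Set V, A.Nonempty → MeasurableSet A →
      Integrable (fun u => Metric.infDist u A) μ)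
    (x : ℝ) :
    (⨆ (f : V → ℝ) (_ : Integrable f μ) (_ : ∀ u v, |f u - f v| ≤ dist u v),
        μ {u | f u - ∫ v, f v ∂μ ≥ x}) =
    ⨆ (A : Set V) (_ : A.Nonempty) (_ : MeasurableSet A),
        μ {u | (-Metric.infDist u A) - ∫ v, (-Metric.infDist v A) ∂μ ≥ x} := by
  apply le_antisymm
  · refine iSup_le fun f => iSup_le fun hf => iSup_le fun hlip => ?_
    set c := ∫ v, f v ∂μ with hc
    have hL : LipschitzWith 1 f := by
      refine LipschitzWith.of_dist_le_mul fun u v => ?_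
      rw [Real.dist_eq, NNReal.coe_one, one_mul]
      exact hlip u v
    have hmeas : Measurable f := hL.continuous.measurable
    set A := {u | f u - c ≥ x} with hA
    have hAm : MeasurableSet A := by
      have : A = {u | x ≤ f u - c} := rfl
      rw [this]
      exact measurableSet_le measurable_const ((hmeas.sub_const c))
    rcases A.eq_empty_or_nonempty with h | h
    · rw [h]; simp
    · refine le_trans ?_ (le_iSup_of_le A (le_iSup_of_le h (le_iSup_of_le hAm le_rfl)))
      refine measure_mono fun u hu => ?_
      have hu' : u ∈ A := hu
      have h0 : Metric.infDist u A = 0 := Metric.infDist_zero_of_mem hu'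
      have hle : ∀ w, -Metric.infDist w A ≤ f w - (c + x) := by
        intro w
        rw [neg_le, neg_sub]
        have : (c + x) - f w ≤ Metric.infDist w A := by
          rw [Metric.infDist_eq_iInf]
          haveI : Nonempty A := h.to_subtype
          refine le_ciInf fun a => ?_
          have hax : x ≤ f a.1 - c := a.2
          have h1 : f a.1 - f w ≤ dist a.1 w := (abs_le.mp (hlip a.1 w)).2
          rw [dist_comm] at h1
          linarith
        linarith
      have hint1 : Integrable (fun w => -Metric.infDist w A) μ := (hintA A h hAm).neg
      have hint2 : Integrable (fun w => f w - (c + x)) μ := hf.sub (integrable_const _)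
      have hI : (∫ v, -Metric.infDist v A ∂μ) ≤ -x := by
        calc (∫ v, -Metric.infDist v A ∂μ) ≤ ∫ v, f v - (c + x) ∂μ :=
              integral_mono hint1 hint2 hle
          _ = c - (c + x) := by
              rw [integral_sub hf (integrable_const _), integral_const, probReal_univ]
              simp [hc]
          _ = -x := by ring
      show -Metric.infDist u A - ∫ v, -Metric.infDist v A ∂μ ≥ x
      rw [h0]
      linarith
  · refine iSup_le fun A => iSup_le fun hA => iSup_le fun hAm => ?_
    refine le_iSup_of_le (fun u => -Metric.infDist u A) (le_iSup_of_le (hintA A hA hAm).neg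
      (le_iSup_of_le ?_ le_rfl))
    intro u v
    have h1 := (Metric.lipschitz_infDist_pt A).dist_le_mul u v
    rw [NNReal.coe_one, one_mul, Real.dist_eq] at h1
    calc |(-Metric.infDist u A) - (-Metric.infDist v A)|
        = |Metric.infDist u A - Metric.infDist v A| := by rw [← abs_neg]; ring_nf
      _ ≤ dist u v := h1
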